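/- Let λ, β, μ, μ', α > 0 and γ, ρ ∈ [0,1]. Define g(S,I) := (1+γS)(1+ρI), f₁(S,I) := λ − μS − βSI/(1+γS), and f₂(S,I) := −(μ+μ')I + βSI/(1+γS) − αI/(1+ρI). Then for all S ≥ 0, I ≥ 0: ∂(g·f₁)/∂S + ∂(g·f₂)/∂I = ã·I² + b̃·SI + c̃·S + d̃·I + ẽ, where ã := −βρ, b̃ := −4γμρ − 2γμ'ρ + 2βρ, c̃ := −αγ − 3γμ − γμ' + β, d̃ := γλρ − 3μρ − 2μ'ρ − β, ẽ := γλ − α − 2μ − μ'. -/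

import Mathlib

/-- Dulac divergence computation: with `g(S,I) = (1+γS)(1+ρI)` and `f₁`, `f₂` the
right-hand sides of the reduced model, `∂(g·f₁)/∂S + ∂(g·f₂)/∂I` equals the quadratic
`ã·I² + b̃·SI + c̃·S + d̃·I + ẽ` with the coefficients of the paper. -/
theorem dulac_divergence
    (lam β μ μ' α γ ρ : ℝ)
    (hlam : 0 < lam) (hβ : 0 < β) (hμ : 0 < μ) (hμ' : 0 < μ') (hα : 0 < α)
    (hγ : γ ∈ Set.Icc (0:ℝ) 1) (hρ : ρ ∈ Set.Icc (0:ℝ) 1) :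
    ∀ S I : ℝ, 0 ≤ S → 0 ≤ I →
      deriv (fun s => (1 + γ * s) * (1 + ρ * I) *
          (lam - μ * s - β * s * I / (1 + γ * s))) S
      + deriv (fun i => (1 + γ * S) * (1 + ρ * i) *
          (-(μ + μ') * i + β * S * i / (1 + γ * S) - α * i / (1 + ρ * i))) I
      = (-(β * ρ)) * I ^ 2
        + (-(4 * γ * μ * ρ) - 2 * γ * μ' * ρ + 2 * β * ρ) * (S * I)
        + (-(α * γ) - 3 * γ * μ - γ * μ' + β) * S
        + (γ * lam * ρ - 3 * μ * ρ - 2 * μ' * ρ - β) * I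
        + (γ * lam - α - 2 * μ - μ') := by
  intro S I hS hI
  have hγ0 : (0:ℝ) ≤ γ := hγ.1
  have hρ0 : (0:ℝ) ≤ ρ := hρ.1
  have ha : (0:ℝ) < 1 + γ * S := by positivity
  have hb : (0:ℝ) < 1 + ρ * I := by positivity
  -- eventual equality for the first function
  have hev1 : (fun s => (1 + γ * s) * (1 + ρ * I) *
      (lam - μ * s - β * s * I / (1 + γ * s)))
      =ᶠ[nhds S] (fun s => (1 + ρ * I) * ((1 + γ * s) * (lam - μ * s) - β * s * I)) := by
    have hcont : ContinuousAt (fun s : ℝ => 1 + γ * s) S := by fun_prop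
    have hpos : ∀ᶠ s in nhds S, (0:ℝ) < 1 + γ * s :=
      hcont.eventually (eventually_gt_nhds ha)
    filter_upwards [hpos] with s hs
    have hs' : (1 + γ * s) ≠ 0 := ne_of_gt hs
    field_simp
  have hev2 : (fun i => (1 + γ * S) * (1 + ρ * i) *
      (-(μ + μ') * i + β * S * i / (1 + γ * S) - α * i / (1 + ρ * i)))
      =ᶠ[nhds I] (fun i => ((-(μ + μ') * (1 + γ * S) + β * S) * i) * (1 + ρ * i)
        - α * (1 + γ * S) * i) := by
    have hcont : ContinuousAt (fun i : ℝ => 1 + ρ * i) I := by fun_prop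
    have hpos : ∀ᶠ i in nhds I, (0:ℝ) < 1 + ρ * i :=
      hcont.eventually (eventually_gt_nhds hb)
    filter_upwards [hpos] with i hi
    have hi' : (1 + ρ * i) ≠ 0 := ne_of_gt hi
    have ha' : (1 + γ * S) ≠ 0 := ne_of_gt ha
    field_simp
  -- derivative of the first simplified function
  have hd1 : HasDerivAt (fun s => (1 + ρ * I) * ((1 + γ * s) * (lam - μ * s) - β * s * I))
      ((1 + ρ * I) * (γ * (lam - μ * S) + (1 + γ * S) * (-μ) - β * I)) S := by
    have h1 : HasDerivAt (fun s : ℝ => 1 + γ * s) γ S := by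
      simpa using ((hasDerivAt_id S).const_mul γ).const_add 1
    have h2 : HasDerivAt (fun s : ℝ => lam - μ * s) (-μ) S := by
      simpa using ((hasDerivAt_id S).const_mul μ).const_sub lam
    have h3 : HasDerivAt (fun s : ℝ => β * s * I) (β * I) S := by
      simpa using (((hasDerivAt_id S).const_mul β).mul_const I)
    have := ((h1.mul h2).sub h3).const_mul (1 + ρ * I)
    simpa [mul_comm, mul_left_comm, mul_assoc] using this
  have hd2 : HasDerivAt (fun i => ((-(μ + μ') * (1 + γ * S) + β * S) * i) * (1 + ρ * i)
      - α * (1 + γ * S) * i)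
      ((-(μ + μ') * (1 + γ * S) + β * S) * (1 + ρ * I)
        + ((-(μ + μ') * (1 + γ * S) + β * S) * I) * ρ - α * (1 + γ * S)) I := by
    have h1 : HasDerivAt (fun i : ℝ => (-(μ + μ') * (1 + γ * S) + β * S) * i)
        (-(μ + μ') * (1 + γ * S) + β * S) I := by
      simpa using (hasDerivAt_id I).const_mul (-(μ + μ') * (1 + γ * S) + β * S)
    have h2 : HasDerivAt (fun i : ℝ => 1 + ρ * i) ρ I := by
      simpa using ((hasDerivAt_id I).const_mul ρ).const_add 1
    have h3 : HasDerivAt (fun i : ℝ => α * (1 + γ * S) * i) (α * (1 + γ * S)) I := by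
      simpa using (hasDerivAt_id I).const_mul (α * (1 + γ * S))
    exact (h1.mul h2).sub h3
  rw [hev1.deriv_eq, hev2.deriv_eq, hd1.deriv, hd2.deriv]
  ring
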